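/- Let α ∈ {1, 9/7} and define h(ω) = 2 + 2cos(ω) + ω·sin(ω)·(1 − 2απ). Then: (a) h has exactly one zero in the open interval (0,π), and this zero lies in [π/6, π/2]; (b) h((2k−1)π) = 0 for every integer k ≥ 1; (c) for every integer k ≥ 1, h has exactly one zero in the open interval ((2k−1)π, (2k+1)π), and this zero lies in [2kπ, (2k+½)π]. Consequently the set of ω > 0 with h(ω) = 0 consists exactly of the zeros listed in (a), (b), (c). -/

import Mathlib

open Real

/-- The transcendental function `h(ω) = 2 + 2cos(ω) + ω·sin(ω)·(1 − 2απ)`. -/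
noncomputable def hZero (α ω : ℝ) : ℝ := 2 + 2 * Real.cos ω + ω * Real.sin ω * (1 - 2 * α * π)

/-- Auxiliary factor: `F c a t = 2cos(t/2) + c(t+a)sin(t/2)`. -/
noncomputable def Faux (c a t : ℝ) : ℝ := 2 * Real.cos (t/2) + c * (t + a) * Real.sin (t/2)

lemma hZero_factor (α ω : ℝ) :
    hZero α ω = 2 * Real.cos (ω/2) * Faux (1 - 2*α*π) 0 ω := by
  have h1 : Real.cos ω = 2 * Real.cos (ω/2)^2 - 1 := by
    have := Real.cos_two_mul (ω/2)
    rw [show 2*(ω/2) = ω by ring] at this; linarith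
  have h2 : Real.sin ω = 2 * Real.sin (ω/2) * Real.cos (ω/2) := by
    have := Real.sin_two_mul (ω/2)
    rw [show 2*(ω/2) = ω by ring] at this; linarith
  simp only [hZero, Faux, h1, h2]; ring

lemma Faux_hasDeriv (c a t : ℝ) :
    HasDerivAt (Faux c a)
      ((c - 1) * Real.sin (t/2) + c * (t + a) * Real.cos (t/2) / 2) t := by
  have hhalf : HasDerivAt (fun t : ℝ => t / 2) (1/2) t := (hasDerivAt_id t).div_const 2
  have hcos : HasDerivAt (fun t : ℝ => Real.cos (t/2)) (-Real.sin (t/2) * (1/2)) t :=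
    by have := (Real.hasDerivAt_cos (t/2)).comp t hhalf; exact this
  have hsin : HasDerivAt (fun t : ℝ => Real.sin (t/2)) (Real.cos (t/2) * (1/2)) t :=
    by have := (Real.hasDerivAt_sin (t/2)).comp t hhalf; exact this
  have hlin : HasDerivAt (fun t : ℝ => c * (t + a)) c t := by
    simpa using ((hasDerivAt_id t).add_const a).const_mul c
  have h := (hcos.const_mul 2).add (hlin.mul hsin)
  have heq : HasDerivAt (fun t : ℝ => 2 * Real.cos (t/2) + c * (t + a) * Real.sin (t/2))
      ((c - 1) * Real.sin (t/2) + c * (t + a) * Real.cos (t/2) / 2) t := by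
    exact h.congr_deriv (by ring)
  exact heq

lemma Faux_continuous (c a : ℝ) : Continuous (Faux c a) := by
  unfold Faux; continuity

lemma Faux_strictAnti {c a : ℝ} (hc : c < 0) (ha : 0 ≤ a) :
    StrictAntiOn (Faux c a) (Set.Icc 0 π) := by
  apply strictAntiOn_of_deriv_neg (convex_Icc 0 π) (Faux_continuous c a).continuousOn
  intro t ht
  rw [interior_Icc] at ht
  rw [(Faux_hasDeriv c a t).deriv]
  have hpi := Real.pi_pos
  have h1 : 0 < Real.sin (t/2) :=
    Real.sin_pos_of_pos_of_lt_pi (by linarith [ht.1]) (by linarith [ht.2])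
  have h2 : 0 < Real.cos (t/2) :=
    Real.cos_pos_of_mem_Ioo ⟨by linarith [ht.1], by linarith [ht.2]⟩
  have hta : 0 < t + a := by linarith [ht.1]
  nlinarith [mul_pos h1 (show (0:ℝ) < 1 - c by linarith),
    mul_pos (mul_pos (show (0:ℝ) < -c by linarith) hta) h2]

lemma Faux_pi_div_two_neg {c a : ℝ} (hc : c ≤ 1 - 2*π) (ha : 0 ≤ a) :
    Faux c a (π/2) < 0 := by
  have hpi := Real.pi_gt_three
  have hcneg : c < 0 := by linarith
  have h2 : (π/2)/2 = π/4 := by ring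
  have hs : Real.sin (π/4) = Real.sqrt 2 / 2 := Real.sin_pi_div_four
  have hcc : Real.cos (π/4) = Real.sqrt 2 / 2 := Real.cos_pi_div_four
  have hsq : (0:ℝ) < Real.sqrt 2 := Real.sqrt_pos.mpr (by norm_num)
  have key : c * (π/2 + a) < -2 := by
    have h1 : c * a ≤ 0 := mul_nonpos_of_nonpos_of_nonneg hcneg.le ha
    nlinarith
  unfold Faux
  rw [h2, hs, hcc]
  nlinarith

lemma Faux_pos_of_nonpos {c a t : ℝ} (hc : c < 0) (ha : π ≤ a)
    (ht1 : -π < t) (ht2 : t ≤ 0) : 0 < Faux c a t := by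
  have hpi := Real.pi_pos
  have h2 : 0 < Real.cos (t/2) :=
    Real.cos_pos_of_mem_Ioo ⟨by linarith, by linarith⟩
  have h1 : Real.sin (t/2) ≤ 0 :=
    Real.sin_nonpos_of_nonpos_of_neg_pi_le (by linarith) (by linarith)
  have hta : 0 < t + a := by linarith
  have hprod : 0 ≤ (-(c * (t + a))) * (-(Real.sin (t/2))) :=
    mul_nonneg (by nlinarith) (by linarith)
  unfold Faux; nlinarith [hprod]

lemma Faux_shift (c : ℝ) (k : ℕ) (t : ℝ) :
    Faux c 0 (t + 2*k*π) = (-1)^k * Faux c (2*k*π) t := by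
  have hc : Real.cos ((t + 2*k*π)/2) = (-1)^k * Real.cos (t/2) := by
    rw [show (t + 2*k*π)/2 = t/2 + k*π by ring, Real.cos_add_nat_mul_pi]
  have hs : Real.sin ((t + 2*k*π)/2) = (-1)^k * Real.sin (t/2) := by
    rw [show (t + 2*k*π)/2 = t/2 + k*π by ring, Real.sin_add_nat_mul_pi]
  unfold Faux
  rw [hc, hs]; ring

set_option maxHeartbeats 1000000 in
/-- **Location of the positive zeros of `h`.**  For `α ∈ {1, 9/7}`:
(a) `h` has exactly one zero in `(0,π)`, lying in `[π/6, π/2]`;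
(b) `h((2k−1)π) = 0` for every `k ≥ 1`;
(c) for every `k ≥ 1`, `h` has exactly one zero in `((2k−1)π, (2k+1)π)`, lying in
`[2kπ, (2k+½)π]`.  Consequently every positive zero of `h` is one of the above. -/
theorem hZero_positive_zeros (α : ℝ) (hα : α = 1 ∨ α = 9 / 7) :
    ((∃! ω : ℝ, ω ∈ Set.Ioo 0 π ∧ hZero α ω = 0) ∧
      ∀ ω ∈ Set.Ioo 0 π, hZero α ω = 0 → ω ∈ Set.Icc (π / 6) (π / 2)) ∧
    (∀ k : ℕ, 1 ≤ k → hZero α ((2 * (k : ℝ) - 1) * π) = 0) ∧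
    (∀ k : ℕ, 1 ≤ k →
      (∃! ω : ℝ, ω ∈ Set.Ioo ((2 * (k : ℝ) - 1) * π) ((2 * (k : ℝ) + 1) * π) ∧
        hZero α ω = 0) ∧
      ∀ ω ∈ Set.Ioo ((2 * (k : ℝ) - 1) * π) ((2 * (k : ℝ) + 1) * π), hZero α ω = 0 →
        ω ∈ Set.Icc (2 * (k : ℝ) * π) ((2 * (k : ℝ) + 1 / 2) * π)) ∧
    (∀ ω : ℝ, 0 < ω → hZero α ω = 0 →
      ω ∈ Set.Ioo 0 π ∨ (∃ k : ℕ, 1 ≤ k ∧ ω = (2 * (k : ℝ) - 1) * π) ∨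
        ∃ k : ℕ, 1 ≤ k ∧ ω ∈ Set.Ioo ((2 * (k : ℝ) - 1) * π) ((2 * (k : ℝ) + 1) * π)) := by
  have hpi3 := Real.pi_gt_three
  have hpi315 : π < 3.15 := Real.pi_lt_d2
  have hpi := Real.pi_pos
  obtain ⟨c, hcdef⟩ : ∃ c : ℝ, c = 1 - 2 * α * π := ⟨_, rfl⟩
  have hc_le : c ≤ 1 - 2*π := by rcases hα with h | h <;> rw [hcdef, h] <;> nlinarith
  have hc_ge : 1 - 18*π/7 ≤ c := by rcases hα with h | h <;> rw [hcdef, h] <;> nlinarith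
  have hcneg : c < 0 := by linarith
  -- part (a)
  have hfac : ∀ ω : ℝ, hZero α ω = 2 * Real.cos (ω/2) * Faux c 0 ω := by
    intro ω; rw [hcdef]; exact hZero_factor α ω
  have hSA0 : StrictAntiOn (Faux c 0) (Set.Icc 0 π) := Faux_strictAnti hcneg le_rfl
  have hp6 : 0 < Faux c 0 (π/6) := by
    have h12 : (π/6)/2 = π/12 := by ring
    have hcos : Real.sqrt 3 / 2 ≤ Real.cos (π/12) := by
      rw [← Real.cos_pi_div_six]
      exact Real.cos_le_cos_of_nonneg_of_le_pi (by positivity) (by linarith) (by linarith)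
    have hsinle : Real.sin (π/12) ≤ π/12 := Real.sin_le (by positivity)
    have hsinpos : 0 < Real.sin (π/12) :=
      Real.sin_pos_of_pos_of_lt_pi (by positivity) (by linarith)
    have hsqrt3 : (1.7:ℝ) < Real.sqrt 3 := by
      nlinarith [Real.sq_sqrt (show (0:ℝ) ≤ 3 by norm_num), Real.sqrt_nonneg 3]
    unfold Faux
    rw [h12]
    simp only [add_zero]
    have e2 : c * (π/6) * Real.sin (π/12) ≥ c * (π/6) * (π/12) := by
      nlinarith [mul_nonneg (show 0 ≤ π/12 - Real.sin (π/12) by linarith)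
        (show 0 ≤ -(c*(π/6)) by nlinarith)]
    have hpi2 : π^2 < 9.9225 := by nlinarith
    have e4 : -c * π^2 < 70.45 := by
      nlinarith [mul_le_mul_of_nonneg_right (show -c ≤ 18*π/7 - 1 by linarith) (sq_nonneg π)]
    have e5 : c * (π/6) * (π/12) = c * π^2 / 72 := by ring
    linarith
  have hp2 : Faux c 0 (π/2) < 0 := Faux_pi_div_two_neg hc_le le_rfl
  have hzero_iff : ∀ ω ∈ Set.Ioo (0:ℝ) π, (hZero α ω = 0 ↔ Faux c 0 ω = 0) := by
    intro ω hω
    have hcospos : 0 < Real.cos (ω/2) :=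
      Real.cos_pos_of_mem_Ioo ⟨by linarith [hω.1], by linarith [hω.2]⟩
    rw [hfac ω]
    constructor
    · intro h
      rcases mul_eq_zero.mp h with h' | h'
      · rcases mul_eq_zero.mp h' with h'' | h'' <;> [norm_num at h''; linarith]
      · exact h'
    · intro h; rw [h]; ring
  have parta : (∃! ω : ℝ, ω ∈ Set.Ioo 0 π ∧ hZero α ω = 0) ∧
      ∀ ω ∈ Set.Ioo 0 π, hZero α ω = 0 → ω ∈ Set.Icc (π / 6) (π / 2) := by
    constructor
    · obtain ⟨x, hx, hfx⟩ := intermediate_value_Ioo' (show π/6 ≤ π/2 by linarith)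
        (Faux_continuous c 0).continuousOn (show (0:ℝ) ∈ Set.Ioo (Faux c 0 (π/2)) (Faux c 0 (π/6)) from ⟨hp2, hp6⟩)
      have hxmem : x ∈ Set.Ioo (0:ℝ) π := ⟨by linarith [hx.1], by linarith [hx.2]⟩
      refine ⟨x, ⟨hxmem, (hzero_iff x hxmem).mpr hfx⟩, ?_⟩
      intro y hy
      have hfy : Faux c 0 y = 0 := (hzero_iff y hy.1).mp hy.2
      exact hSA0.injOn ⟨hy.1.1.le, hy.1.2.le⟩ ⟨hxmem.1.le, hxmem.2.le⟩ (by rw [hfy, hfx])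
    · intro ω hω hz
      have hf : Faux c 0 ω = 0 := (hzero_iff ω hω).mp hz
      constructor
      · by_contra hlt
        push_neg at hlt
        have := hSA0 ⟨hω.1.le, hω.2.le⟩ ⟨by positivity, by linarith⟩ hlt
        linarith
      · by_contra hlt
        push_neg at hlt
        have := hSA0 ⟨by positivity, by linarith⟩ ⟨hω.1.le, hω.2.le⟩ hlt
        linarith
  -- part (b)
  have partb : ∀ k : ℕ, 1 ≤ k → hZero α ((2 * (k : ℝ) - 1) * π) = 0 := by
    intro k hk
    have hco : Real.cos ((2 * (k : ℝ) - 1) * π) = -1 := by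
      rw [show (2 * (k : ℝ) - 1) * π = -π + ((2*k : ℕ) : ℝ) * π by push_cast; ring]
      rw [Real.cos_add_nat_mul_pi, pow_mul]
      simp
    have hsi : Real.sin ((2 * (k : ℝ) - 1) * π) = 0 := by
      rw [show (2 * (k : ℝ) - 1) * π = ((2*k - 1 : ℕ) : ℝ) * π by
        push_cast [Nat.cast_sub (by omega : 1 ≤ 2*k)]; ring]
      exact Real.sin_nat_mul_pi _
    rw [hZero, hco, hsi]; ring
  -- part (c)
  have partc : ∀ k : ℕ, 1 ≤ k →
      (∃! ω : ℝ, ω ∈ Set.Ioo ((2 * (k : ℝ) - 1) * π) ((2 * (k : ℝ) + 1) * π) ∧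
        hZero α ω = 0) ∧
      ∀ ω ∈ Set.Ioo ((2 * (k : ℝ) - 1) * π) ((2 * (k : ℝ) + 1) * π), hZero α ω = 0 →
        ω ∈ Set.Icc (2 * (k : ℝ) * π) ((2 * (k : ℝ) + 1 / 2) * π) := by
    intro k hk
    have hk1 : (1:ℝ) ≤ (k:ℝ) := by exact_mod_cast hk
    have hSA : StrictAntiOn (Faux c (2*k*π)) (Set.Icc 0 π) :=
      Faux_strictAnti hcneg (by positivity)
    have hF0 : Faux c (2*k*π) 0 = 2 := by simp [Faux]
    have hFpi2 : Faux c (2*k*π) (π/2) < 0 := Faux_pi_div_two_neg hc_le (by positivity)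
    have hzero_iff2 : ∀ ω ∈ Set.Ioo ((2 * (k : ℝ) - 1) * π) ((2 * (k : ℝ) + 1) * π),
        (hZero α ω = 0 ↔ Faux c (2*k*π) (ω - 2*k*π) = 0) := by
      intro ω hω
      have hcosne : Real.cos (ω/2) ≠ 0 := by
        intro h
        obtain ⟨n, hn⟩ := Real.cos_eq_zero_iff.mp h
        have hωeq : ω = (2*(n:ℝ)+1) * π := by
          have : ω/2 = (2*(n:ℝ)+1) * π / 2 := hn
          linarith
        rw [hωeq] at hω
        have h1 : (2*(k:ℝ)-1) < 2*(n:ℝ)+1 := lt_of_mul_lt_mul_right (by linarith [hω.1]) hpi.le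
        have h2 : 2*(n:ℝ)+1 < 2*(k:ℝ)+1 := lt_of_mul_lt_mul_right (by linarith [hω.2]) hpi.le
        have h1' : 2*(k:ℤ)-1 < 2*n+1 := by exact_mod_cast h1
        have h2' : 2*(n:ℤ)+1 < 2*(k:ℤ)+1 := by exact_mod_cast h2
        omega
      have hshift : Faux c 0 ω = (-1)^k * Faux c (2*k*π) (ω - 2*k*π) := by
        have := Faux_shift c k (ω - 2*k*π)
        rw [show ω - 2*k*π + 2*k*π = ω by ring] at this
        exact this
      rw [hfac ω, hshift]
      constructor
      · intro h
        rcases mul_eq_zero.mp h with h' | h'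
        · rcases mul_eq_zero.mp h' with h'' | h'' <;> [norm_num at h''; exact absurd h'' hcosne]
        · rcases mul_eq_zero.mp h' with h'' | h''
          · exact absurd h'' (by positivity)
          · exact h''
      · intro h; rw [h]; ring
    constructor
    · obtain ⟨t, ht, hft⟩ := intermediate_value_Ioo' (show (0:ℝ) ≤ π/2 by linarith)
        (Faux_continuous c (2*k*π)).continuousOn
        (show (0:ℝ) ∈ Set.Ioo (Faux c (2*k*π) (π/2)) (Faux c (2*k*π) 0) from ⟨hFpi2, by rw [hF0]; norm_num⟩)
      set ω := t + 2*k*π with hωdef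
      have hωmem : ω ∈ Set.Ioo ((2 * (k : ℝ) - 1) * π) ((2 * (k : ℝ) + 1) * π) :=
        ⟨by rw [hωdef]; nlinarith [ht.1], by rw [hωdef]; nlinarith [ht.2]⟩
      have hωz : hZero α ω = 0 := by
        rw [hzero_iff2 ω hωmem, show ω - 2*k*π = t by rw [hωdef]; ring]
        exact hft
      refine ⟨ω, ⟨hωmem, hωz⟩, ?_⟩
      intro y hy
      have hfy : Faux c (2*k*π) (y - 2*k*π) = 0 := (hzero_iff2 y hy.1).mp hy.2
      have hypos : 0 < y - 2*k*π := by
        by_contra hle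
        push_neg at hle
        have := Faux_pos_of_nonpos hcneg (by nlinarith : π ≤ 2*(k:ℝ)*π)
          (by nlinarith [hy.1.1] : -π < y - 2*k*π) hle
        linarith
      have hylt : y - 2*k*π < π := by nlinarith [hy.1.2]
      have htmem : t ∈ Set.Icc (0:ℝ) π := ⟨ht.1.le, by linarith [ht.2]⟩
      have : y - 2*k*π = t :=
        hSA.injOn ⟨hypos.le, hylt.le⟩ htmem (by rw [hfy, hft])
      rw [hωdef]; linarith
    · intro ω hω hz
      have hf : Faux c (2*k*π) (ω - 2*k*π) = 0 := (hzero_iff2 ω hω).mp hz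
      have hpos : 0 < ω - 2*k*π := by
        by_contra hle
        push_neg at hle
        have := Faux_pos_of_nonpos hcneg (by nlinarith : π ≤ 2*(k:ℝ)*π)
          (by nlinarith [hω.1] : -π < ω - 2*k*π) hle
        linarith
      have hlt : ω - 2*k*π < π := by nlinarith [hω.2]
      constructor
      · nlinarith
      · by_contra hgt
        push_neg at hgt
        have hgap : π/2 < ω - 2*k*π := by nlinarith
        have := hSA ⟨by linarith, by linarith⟩ ⟨hpos.le, hlt.le⟩ hgap
        linarith [hFpi2]
  refine ⟨parta, partb, partc, ?_⟩
  -- part (d): every positive real is in one of the intervals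
  intro ω hωpos _
  by_cases hsmall : ω < π
  · exact Or.inl ⟨hωpos, hsmall⟩
  · push_neg at hsmall
    right
    set r : ℝ := ω / π with hrdef
    have hr1 : 1 ≤ r := (one_le_div hpi).mpr hsmall
    set k : ℕ := ⌊(r + 1) / 2⌋₊ with hkdef
    have hk1 : 1 ≤ k := by
      rw [hkdef]
      exact Nat.le_floor (by linarith)
    have hkle : (k:ℝ) ≤ (r+1)/2 := Nat.floor_le (by linarith)
    have hklt : (r+1)/2 < (k:ℝ) + 1 := Nat.lt_floor_add_one _
    have hωr : ω = r * π := by rw [hrdef]; field_simp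
    have hlow : (2*(k:ℝ) - 1) * π ≤ ω := by rw [hωr]; nlinarith
    have hhigh : ω < (2*(k:ℝ) + 1) * π := by rw [hωr]; nlinarith
    rcases eq_or_lt_of_le hlow with heq | hlt
    · exact Or.inl ⟨k, hk1, heq.symm⟩
    · exact Or.inr ⟨k, hk1, hlt, hhigh⟩
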